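/- For every x₀ > 0, the density f(x) = (1/x₀)·exp(-(x₀-x)/x₀)·𝟙{x ≤ x₀} is an upper semi-continuous log-concave probability density on ℝ with mean zero, and it satisfies f(x₀) = 1/x₀. Consequently the supremum over mean-zero log-concave densities of the value at x₀ equals 1/x₀. -/

import Mathlib

open MeasureTheory Set Filter Real Topology

-- reflection of integrability
lemma refl_integrableOn {f : ℝ → ℝ} {a : ℝ}
    (h : IntegrableOn (fun x => f (-x)) (Ioi (-a))) : IntegrableOn f (Iic a) := by
  have h2 := (MeasurePreserving.integrableOn_comp_preimage
    (Measure.measurePreserving_neg (volume : Measure ℝ))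
    (Homeomorph.neg ℝ).measurableEmbedding).2 h
  have : (fun x : ℝ => -x) ⁻¹' (Ioi (-a)) = Iio a := by
    ext x; simp [neg_lt]
  rw [this] at h2
  have h3 : IntegrableOn f (Iio a) := by
    apply h2.congr_fun _ measurableSet_Iio
    intro x _; simp
  rw [integrableOn_Iic_iff_integrableOn_Iio]
  exact h3

-- integrability of exponential on Iic
lemma exp_integrableOn_Iic {k x₀ : ℝ} (hk : 0 < k) :
    IntegrableOn (fun x => Real.exp (k * (x - x₀))) (Iic x₀) := by
  apply refl_integrableOn
  have : IntegrableOn (fun x : ℝ => Real.exp (-k * x) * Real.exp (-k * x₀)) (Ioi (-x₀)) :=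
    (exp_neg_integrableOn_Ioi _ hk).mul_const _
  apply this.congr_fun _ measurableSet_Ioi
  intro x _
  simp only [← Real.exp_add]
  ring_nf

-- t ≤ (2/k) exp(k t /2) for k > 0 (any t)
lemma lin_le_exp {k t : ℝ} (hk : 0 < k) : t ≤ 2 / k * Real.exp (k * t / 2) := by
  have h := Real.add_one_le_exp (k * t / 2)
  have h2 : k * t / 2 ≤ Real.exp (k * t / 2) := by nlinarith [Real.exp_pos (k * t / 2)]
  rw [div_mul_eq_mul_div, le_div_iff₀ hk]
  nlinarith

-- integrability of (x₀ - x) * exp (k (x - x₀)) on Iic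
lemma linexp_integrableOn_Iic {k x₀ : ℝ} (hk : 0 < k) :
    IntegrableOn (fun x => (x₀ - x) * Real.exp (k * (x - x₀))) (Iic x₀) := by
  have hint : IntegrableOn (fun x => 2 / k * Real.exp ((k/2) * (x - x₀))) (Iic x₀) :=
    (exp_integrableOn_Iic (by linarith)).const_mul _
  apply Integrable.mono hint
  · exact ((continuous_const.sub continuous_id).mul
      ((continuous_const.mul (continuous_id.sub continuous_const)).rexp)).aestronglyMeasurable
  · rw [ae_restrict_iff' measurableSet_Iic]
    filter_upwards with x hx
    have hx' : x ≤ x₀ := hx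
    have h1 : (0:ℝ) ≤ x₀ - x := by linarith
    have h2 : (x₀ - x) ≤ 2 / k * Real.exp (k * (x₀ - x) / 2) := lin_le_exp hk
    have e1 : Real.exp (k * (x - x₀)) = (Real.exp (k * (x₀ - x) / 2))⁻¹ * Real.exp ((k/2) * (x - x₀)) := by
      rw [← Real.exp_neg, ← Real.exp_add]; congr 1; ring
    rw [Real.norm_eq_abs, Real.norm_eq_abs, abs_of_nonneg (by positivity), abs_of_nonneg (by positivity)]
    rw [e1]
    have h3 : (x₀ - x) * ((Real.exp (k * (x₀ - x) / 2))⁻¹ * Real.exp ((k/2) * (x - x₀)))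
        ≤ (2 / k * Real.exp (k * (x₀ - x) / 2)) * ((Real.exp (k * (x₀ - x) / 2))⁻¹ * Real.exp ((k/2) * (x - x₀))) := by
      apply mul_le_mul_of_nonneg_right h2 (by positivity)
    calc (x₀ - x) * ((Real.exp (k * (x₀ - x) / 2))⁻¹ * Real.exp ((k/2) * (x - x₀))) ≤ _ := h3
      _ = 2 / k * Real.exp ((k/2) * (x - x₀)) := by
          rw [mul_assoc, ← mul_assoc (Real.exp (k * (x₀ - x) / 2)),
            mul_inv_cancel₀ (Real.exp_ne_zero _), one_mul]

lemma tendsto_linear_atBot (k x₀ : ℝ) (hk : 0 < k) :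
    Tendsto (fun x : ℝ => k * (x - x₀)) atBot atBot := by
  apply Tendsto.const_mul_atBot hk
  simpa [sub_eq_add_neg] using tendsto_atBot_add_const_right atBot (-x₀) tendsto_id

lemma my_integral_exp_Iic (k x₀ c : ℝ) (hk : 0 < k) :
    ∫ x in Iic x₀, c * Real.exp (k * (x - x₀)) = c / k := by
  have h := integral_Iic_of_hasDerivAt_of_tendsto'
    (f := fun x => c / k * Real.exp (k * (x - x₀)))
    (f' := fun x => c * Real.exp (k * (x - x₀))) (a := x₀) (m := 0)
    (fun x _ => by
      have hd : HasDerivAt (fun x => c / k * Real.exp (k * (x - x₀)))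
          (c / k * (Real.exp (k * (x - x₀)) * (k * 1))) x :=
        ((((hasDerivAt_id x).sub_const x₀).const_mul k).exp).const_mul (c / k)
      exact hd.congr_deriv (by
        rw [mul_one, mul_comm (Real.exp _) k, ← mul_assoc, div_mul_cancel₀ c hk.ne']))
    ((exp_integrableOn_Iic hk).const_mul c)
    (by
      have := (Real.tendsto_exp_atBot.comp (tendsto_linear_atBot k x₀ hk)).const_mul (c / k)
      simpa using this)
  simpa using h

lemma tendsto_linexp_atBot (k x₀ : ℝ) (hk : 0 < k) :
    Tendsto (fun x : ℝ => (x₀ - x) * Real.exp (k * (x - x₀))) atBot (𝓝 0) := by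
  have hs : Tendsto (fun x : ℝ => k * (x₀ - x)) atBot atTop := by
    have h1 : Tendsto (fun x : ℝ => -(k * (x - x₀))) atBot atTop :=
      tendsto_neg_atBot_atTop.comp (tendsto_linear_atBot k x₀ hk)
    apply h1.congr
    intro x; ring
  have h2 := (Real.tendsto_pow_mul_exp_neg_atTop_nhds_zero 1).comp hs
  have h3 : Tendsto (fun x : ℝ => (1 / k) * ((k * (x₀ - x)) ^ 1 * Real.exp (-(k * (x₀ - x)))))
      atBot (𝓝 ((1 / k) * 0)) := h2.const_mul (1 / k)
  rw [mul_zero] at h3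
  apply h3.congr
  intro x
  rw [pow_one]
  field_simp
  ring_nf

lemma my_integral_linexp_Iic (k x₀ c : ℝ) (hk : 0 < k) :
    ∫ x in Iic x₀, (x₀ - x) * (c * Real.exp (k * (x - x₀))) = c / k ^ 2 := by
  have h := integral_Iic_of_hasDerivAt_of_tendsto'
    (f := fun x => c * Real.exp (k * (x - x₀)) * ((x₀ - x) / k + 1 / k ^ 2))
    (f' := fun x => (x₀ - x) * (c * Real.exp (k * (x - x₀)))) (a := x₀) (m := 0)
    (fun x _ => by
      have he : HasDerivAt (fun x => c * Real.exp (k * (x - x₀)))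
          (c * (Real.exp (k * (x - x₀)) * (k * 1))) x :=
        ((((hasDerivAt_id x).sub_const x₀).const_mul k).exp).const_mul c
      have hl : HasDerivAt (fun x : ℝ => (x₀ - x) / k + 1 / k ^ 2) (-1 / k) x := by
        have : HasDerivAt (fun x : ℝ => x₀ - x) (-1) x := by
          simpa using (hasDerivAt_id x).const_sub x₀
        exact (this.div_const k).add_const (1 / k ^ 2)
      have := he.mul hl
      refine this.congr_deriv ?_
      have hk0 : k ≠ 0 := hk.ne'
      field_simp
      ring)
    ?_ ?_
  · have e0 : (fun x => c * Real.exp (k * (x - x₀)) * ((x₀ - x) / k + 1 / k ^ 2)) x₀ - 0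
        = c / k ^ 2 := by
      simp [div_eq_mul_inv]
    rw [e0] at h
    exact h
  · have h1 : IntegrableOn (fun x => c * ((x₀ - x) * Real.exp (k * (x - x₀)))) (Iic x₀) :=
      (linexp_integrableOn_Iic hk).const_mul c
    apply h1.congr_fun _ measurableSet_Iic
    intro x _; ring
  · have h1 := (tendsto_linexp_atBot k x₀ hk).const_mul (c / k)
    have h2 := (Real.tendsto_exp_atBot.comp (tendsto_linear_atBot k x₀ hk)).const_mul (c / k ^ 2)
    rw [mul_zero] at h1 h2
    have := h1.add h2
    rw [add_zero] at this
    apply this.congr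
    intro x
    simp only [Function.comp]
    field_simp

section parts
variable {x₀ : ℝ} (hx₀ : 0 < x₀)

private noncomputable def fd (x₀ x : ℝ) : ℝ :=
  if x ≤ x₀ then (1 / x₀) * Real.exp (-(x₀ - x) / x₀) else 0

lemma fd_nonneg (hx₀ : 0 < x₀) (x : ℝ) : 0 ≤ fd x₀ x := by
  unfold fd; split
  · positivity
  · exact le_refl 0

lemma fd_cont : Continuous (fun x => (1 / x₀) * Real.exp (-(x₀ - x) / x₀)) := by
  fun_prop

lemma fd_usc (hx₀ : 0 < x₀) : UpperSemicontinuous (fd x₀) := by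
  set φ : ℝ → ℝ := fun x => (1 / x₀) * Real.exp (-(x₀ - x) / x₀) with hφdef
  have hφ : Continuous φ := fd_cont
  intro x y hy
  rcases lt_trichotomy x x₀ with h | h | h
  · have hfx : φ x < y := by
      unfold fd at hy; rwa [if_pos h.le] at hy
    have h1 : ∀ᶠ z in nhds x, φ z < y := (hφ.tendsto x).eventually_lt_const hfx
    filter_upwards [h1, Iio_mem_nhds h] with z hz1 hz2
    unfold fd; rw [if_pos hz2.le]; exact hz1
  · subst h
    have hfx : φ x < y := by
      unfold fd at hy; rwa [if_pos le_rfl] at hy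
    have h0 : (0:ℝ) < y := lt_of_le_of_lt (by positivity) hfx
    have h1 : ∀ᶠ z in nhds x, φ z < y := (hφ.tendsto x).eventually_lt_const hfx
    filter_upwards [h1] with z hz
    unfold fd
    by_cases hz2 : z ≤ x
    · rw [if_pos hz2]; exact hz
    · rw [if_neg hz2]; exact h0
  · have h0 : (0:ℝ) < y := by
      unfold fd at hy; rwa [if_neg (not_le.2 h)] at hy
    filter_upwards [Ioi_mem_nhds h] with z hz
    unfold fd; rw [if_neg (not_le.2 hz)]; exact h0

lemma fd_pos_eq (hx₀ : 0 < x₀) {x : ℝ} (hx : x ≤ x₀) :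
    fd x₀ x = Real.exp (Real.log (1 / x₀) + (x - x₀) / x₀) := by
  unfold fd
  rw [if_pos hx, Real.exp_add, Real.exp_log (by positivity)]
  congr 1
  ring_nf

lemma fd_logconcave (hx₀ : 0 < x₀) (x y a b : ℝ) (ha : 0 ≤ a) (hb : 0 ≤ b)
    (hab : a + b = 1) : fd x₀ x ^ a * fd x₀ y ^ b ≤ fd x₀ (a * x + b * y) := by
  rcases eq_or_lt_of_le ha with ha0 | ha'
  · have hb1 : b = 1 := by linarith
    subst hb1; rw [← ha0]
    simp [Real.rpow_zero, Real.rpow_one]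
  rcases eq_or_lt_of_le hb with hb0 | hb'
  · have ha1 : a = 1 := by linarith
    subst ha1; rw [← hb0]
    simp [Real.rpow_zero, Real.rpow_one]
  by_cases hx : x ≤ x₀
  · by_cases hy : y ≤ x₀
    · have hxy : a * x + b * y ≤ x₀ := by nlinarith
      rw [fd_pos_eq hx₀ hx, fd_pos_eq hx₀ hy, fd_pos_eq hx₀ hxy,
        ← Real.exp_mul, ← Real.exp_mul, ← Real.exp_add]
      apply le_of_eq
      congr 1
      field_simp
      linear_combination (Real.log (1 / x₀) * x₀ - x₀) * hab
    · have : fd x₀ y = 0 := by unfold fd; rw [if_neg hy]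
      rw [this, Real.zero_rpow (ne_of_gt hb')]
      rw [mul_zero]
      exact fd_nonneg hx₀ _
  · have : fd x₀ x = 0 := by unfold fd; rw [if_neg hx]
    rw [this, Real.zero_rpow (ne_of_gt ha'), zero_mul]
    exact fd_nonneg hx₀ _

lemma fd_integral (hx₀ : 0 < x₀) : ∫ x, fd x₀ x = 1 := by
  have hind : (fun x => fd x₀ x) = (Iic x₀).indicator
      (fun x => (1 / x₀) * Real.exp ((1 / x₀) * (x - x₀))) := by
    funext x
    unfold fd
    by_cases h : x ≤ x₀
    · rw [show -(x₀ - x) / x₀ = 1 / x₀ * (x - x₀) by ring]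
      simp [Set.indicator_apply, mem_Iic, h]
    · simp [Set.indicator_apply, mem_Iic, h]
  rw [hind, integral_indicator measurableSet_Iic,
    my_integral_exp_Iic (1 / x₀) x₀ (1 / x₀) (by positivity)]
  field_simp

lemma fd_mean (hx₀ : 0 < x₀) : ∫ x, x * fd x₀ x = 0 := by
  have hind : (fun x => x * fd x₀ x) = (Iic x₀).indicator
      (fun x => x * ((1 / x₀) * Real.exp ((1 / x₀) * (x - x₀)))) := by
    funext x
    unfold fd
    by_cases h : x ≤ x₀
    · rw [show -(x₀ - x) / x₀ = 1 / x₀ * (x - x₀) by ring]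
      simp [Set.indicator_apply, mem_Iic, h]
    · simp [Set.indicator_apply, mem_Iic, h]
  rw [hind, integral_indicator measurableSet_Iic]
  have hsplit : ∀ x : ℝ, x * ((1 / x₀) * Real.exp ((1 / x₀) * (x - x₀)))
      = x₀ * ((1 / x₀) * Real.exp ((1 / x₀) * (x - x₀)))
        - (x₀ - x) * ((1 / x₀) * Real.exp ((1 / x₀) * (x - x₀))) := by
    intro x; ring
  rw [show (fun x => x * ((1 / x₀) * Real.exp ((1 / x₀) * (x - x₀)))) = _ from funext hsplit]
  rw [integral_sub]
  · rw [my_integral_linexp_Iic (1 / x₀) x₀ (1 / x₀) (by positivity)]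
    have : (fun x => x₀ * ((1 / x₀) * Real.exp ((1 / x₀) * (x - x₀))))
        = (fun x => (x₀ * (1 / x₀)) * Real.exp ((1 / x₀) * (x - x₀))) := by
      funext x; ring
    rw [this, my_integral_exp_Iic (1 / x₀) x₀ (x₀ * (1 / x₀)) (by positivity)]
    field_simp
    ring
  · exact ((exp_integrableOn_Iic (by positivity : (0:ℝ) < 1 / x₀)).const_mul (1 / x₀)).const_mul x₀
  · have h1 := (linexp_integrableOn_Iic (x₀ := x₀) (by positivity : (0:ℝ) < 1 / x₀)).const_mul (1 / x₀)
    apply IntegrableOn.congr_fun h1 _ measurableSet_Iic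
    intro x _; ring

lemma fd_value (hx₀ : 0 < x₀) : fd x₀ x₀ = 1 / x₀ := by
  unfold fd
  rw [if_pos le_rfl]
  simp

end parts

section tail

variable {g : ℝ → ℝ}

lemma exists_pos_point (hg0 : ∀ x, 0 ≤ g x) (hint : ∫ x, g x = 1) : ∃ a, 0 < g a := by
  by_contra h
  push_neg at h
  have : g = fun _ => 0 := funext fun x => le_antisymm (h x) (hg0 x)
  rw [this] at hint
  simp at hint

lemma exists_smaller_point (hg0 : ∀ x, 0 ≤ g x) (hgi : Integrable g)
    (hint : ∫ x, g x = 1) {a : ℝ} (ha : 0 < g a) :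
    ∃ b, a < b ∧ g b < g a := by
  obtain ⟨T, hT⟩ : ∃ T, T = a + 2 / g a := ⟨_, rfl⟩
  have hTa : a < T := by
    have : 0 < 2 / g a := by positivity
    linarith
  by_contra h
  push_neg at h
  have hall : ∀ b ∈ Ioo a T, g a ≤ g b := by
    intro b hb
    by_contra hlt
    push_neg at hlt
    exact absurd (h b hb.1) (not_le.2 hlt)
  have h1 : g a * (volume (Ioo a T)).toReal ≤ ∫ x in Ioo a T, g x :=
    setIntegral_ge_of_const_le_real measurableSet_Ioo
      (by rw [Real.volume_Ioo]; exact ENNReal.ofReal_ne_top) hall hgi.integrableOn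
  have h2 : ∫ x in Ioo a T, g x ≤ 1 := by
    rw [← hint]
    exact setIntegral_le_integral hgi (ae_of_all _ hg0)
  rw [Real.volume_Ioo, ENNReal.toReal_ofReal (by linarith)] at h1
  have : T - a = 2 / g a := by rw [hT]; ring
  rw [this] at h1
  have : g a * (2 / g a) = 2 := by field_simp
  rw [this] at h1
  linarith

lemma tail_zero (hg0 : ∀ x, 0 ≤ g x)
    (hlc : ∀ x z a b : ℝ, 0 ≤ a → 0 ≤ b → a + b = 1 → g x ^ a * g z ^ b ≤ g (a * x + b * z))
    {a b : ℝ} (hab : a < b) (ha : 0 < g a) (hb : g b = 0) {t : ℝ} (ht : b < t) :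
    g t = 0 := by
  by_contra hgt
  have hgt' : 0 < g t := lt_of_le_of_ne (hg0 t) (Ne.symm hgt)
  have hta : 0 < t - a := by linarith
  set a' := (t - b) / (t - a) with ha'
  set b' := (b - a) / (t - a) with hb'
  have ha'0 : 0 ≤ a' := div_nonneg (by linarith) (by linarith)
  have hb'0 : 0 ≤ b' := div_nonneg (by linarith) (by linarith)
  have hab' : a' + b' = 1 := by rw [ha', hb']; field_simp; ring
  have hpt : a' * a + b' * t = b := by rw [ha', hb']; field_simp; ring
  have := hlc a t a' b' ha'0 hb'0 hab'
  rw [hpt, hb] at this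
  have : 0 < g a ^ a' * g t ^ b' :=
    mul_pos (Real.rpow_pos_of_pos ha _) (Real.rpow_pos_of_pos hgt' _)
  linarith

lemma tail_decay (hg0 : ∀ x, 0 ≤ g x)
    (hlc : ∀ x z a b : ℝ, 0 ≤ a → 0 ≤ b → a + b = 1 → g x ^ a * g z ^ b ≤ g (a * x + b * z))
    {a b : ℝ} (hab : a < b) (ha : 0 < g a) (hb : 0 < g b) (hba : g b < g a) {t : ℝ} (ht : b < t) :
    g t ≤ g b * Real.exp (-(((Real.log (g a) - Real.log (g b)) / (b - a))) * (t - b)) := by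
  set β := (Real.log (g a) - Real.log (g b)) / (b - a) with hβdef
  by_cases hgt : g t = 0
  · rw [hgt]; positivity
  have hgt' : 0 < g t := lt_of_le_of_ne (hg0 t) (Ne.symm hgt)
  have hta : 0 < t - a := by linarith
  have hba' : 0 < b - a := by linarith
  set a' := (t - b) / (t - a) with ha'
  set b' := (b - a) / (t - a) with hb'
  have ha'0 : 0 ≤ a' := div_nonneg (by linarith) (by linarith)
  have hb'0 : 0 < b' := div_pos (by linarith) (by linarith)
  have hab' : a' + b' = 1 := by rw [ha', hb']; field_simp; ring
  have hpt : a' * a + b' * t = b := by rw [ha', hb']; field_simp; ring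
  have hkey := hlc a t a' b' ha'0 hb'0.le hab'
  rw [hpt] at hkey
  set La := Real.log (g a) with hLa
  set Lb := Real.log (g b) with hLb
  set Lt := Real.log (g t) with hLt
  have hlog : a' * La + b' * Lt ≤ Lb := by
    have h1 : Real.log (g a ^ a' * g t ^ b') ≤ Lb :=
      Real.log_le_log (mul_pos (Real.rpow_pos_of_pos ha _) (Real.rpow_pos_of_pos hgt' _)) hkey
    rwa [Real.log_mul (ne_of_gt (Real.rpow_pos_of_pos ha _))
      (ne_of_gt (Real.rpow_pos_of_pos hgt' _)),
      Real.log_rpow ha, Real.log_rpow hgt'] at h1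
  have hkey' : (t - b) * La + (b - a) * Lt ≤ Lb * (t - a) := by
    rw [ha', hb'] at hlog
    rw [div_mul_eq_mul_div, div_mul_eq_mul_div, ← add_div, div_le_iff₀ hta] at hlog
    linarith
  have hβba : β * (b - a) = La - Lb := by
    rw [hβdef]; field_simp
  have htarget : Lt ≤ Lb - β * (t - b) := by
    have h2 : (b - a) * Lt ≤ (b - a) * (Lb - β * (t - b)) := by nlinarith
    exact le_of_mul_le_mul_left (by linarith) hba'
  calc g t = Real.exp Lt := (Real.exp_log hgt').symm
    _ ≤ Real.exp (Lb - β * (t - b)) := Real.exp_le_exp.2 htarget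
    _ = g b * Real.exp (-β * (t - b)) := by
        rw [sub_eq_add_neg, Real.exp_add, Real.exp_log hb]
        ring_nf

end tail

lemma tail_integrable_right {g : ℝ → ℝ} (hg0 : ∀ x, 0 ≤ g x) (hgm : Measurable g)
    (hgi : Integrable g) (hint : ∫ x, g x = 1)
    (hlc : ∀ x z a b : ℝ, 0 ≤ a → 0 ≤ b → a + b = 1 → g x ^ a * g z ^ b ≤ g (a * x + b * z)) :
    ∃ B : ℝ, 0 ≤ B ∧ IntegrableOn (fun x => x * g x) (Ioi B) := by
  obtain ⟨a, ha⟩ := exists_pos_point hg0 hint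
  obtain ⟨b, hab, hba⟩ := exists_smaller_point hg0 hgi hint ha
  by_cases hb : g b = 0
  · refine ⟨max b 0, le_max_right _ _, ?_⟩
    apply IntegrableOn.congr_fun (integrableOn_zero (ε' := ℝ) (μ := (volume : Measure ℝ)))
      _ measurableSet_Ioi
    intro x hx
    have hz : g x = 0 := tail_zero hg0 hlc hab ha hb (lt_of_le_of_lt (le_max_left b 0) hx)
    simp [hz]
  · have hb' : 0 < g b := lt_of_le_of_ne (hg0 b) (Ne.symm hb)
    set β := (Real.log (g a) - Real.log (g b)) / (b - a) with hβdef
    have hβ : 0 < β := by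
      apply div_pos _ (by linarith)
      have := Real.log_lt_log hb' hba
      linarith
    refine ⟨max b 0, le_max_right _ _, ?_⟩
    set C := (2 / β) * g b * Real.exp (β * b) with hC
    have hCpos : 0 < C := by positivity
    have hdom : IntegrableOn (fun x => C * Real.exp (-(β / 2) * x)) (Ioi (max b 0)) :=
      (exp_neg_integrableOn_Ioi _ (by linarith : 0 < β / 2)).const_mul C
    apply Integrable.mono hdom
    · exact (measurable_id.mul hgm).aestronglyMeasurable
    · rw [ae_restrict_iff' measurableSet_Ioi]
      filter_upwards with x hx
      have hx0 : 0 < x := lt_of_le_of_lt (le_max_right b 0) hx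
      have hxb : b < x := lt_of_le_of_lt (le_max_left b 0) hx
      have hd := tail_decay hg0 hlc hab ha hb' hba hxb
      rw [← hβdef] at hd
      rw [Real.norm_eq_abs, Real.norm_eq_abs,
        abs_of_nonneg (mul_nonneg hx0.le (hg0 x)),
        abs_of_nonneg (by positivity : (0:ℝ) ≤ C * Real.exp (-(β / 2) * x))]
      have h1 : x * g x ≤ x * (g b * Real.exp (-β * (x - b))) :=
        mul_le_mul_of_nonneg_left hd hx0.le
      have h2 : x * (g b * Real.exp (-β * (x - b)))
          ≤ (2 / β * Real.exp (β * x / 2)) * (g b * Real.exp (-β * (x - b))) :=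
        mul_le_mul_of_nonneg_right (lin_le_exp hβ) (by positivity)
      have e : Real.exp (β * x / 2) * Real.exp (-β * (x - b))
          = Real.exp (β * b) * Real.exp (-(β / 2) * x) := by
        rw [← Real.exp_add, ← Real.exp_add]; congr 1; ring
      have h3 : (2 / β * Real.exp (β * x / 2)) * (g b * Real.exp (-β * (x - b)))
          = C * Real.exp (-(β / 2) * x) := by
        calc (2 / β * Real.exp (β * x / 2)) * (g b * Real.exp (-β * (x - b)))
            = 2 / β * g b * (Real.exp (β * x / 2) * Real.exp (-β * (x - b))) := by ring
          _ = 2 / β * g b * (Real.exp (β * b) * Real.exp (-(β / 2) * x)) := by rw [e]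
          _ = C * Real.exp (-(β / 2) * x) := by rw [hC]; ring
      linarith

lemma xg_integrable {g : ℝ → ℝ} (hg0 : ∀ x, 0 ≤ g x) (hgm : Measurable g)
    (hgi : Integrable g) (hint : ∫ x, g x = 1)
    (hlc : ∀ x z a b : ℝ, 0 ≤ a → 0 ≤ b → a + b = 1 → g x ^ a * g z ^ b ≤ g (a * x + b * z)) :
    Integrable (fun x => x * g x) := by
  obtain ⟨B1, hB1, hint1⟩ := tail_integrable_right hg0 hgm hgi hint hlc
  -- reflected function
  set g' : ℝ → ℝ := fun x => g (-x) with hg'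
  have hg0' : ∀ x, 0 ≤ g' x := fun x => hg0 (-x)
  have hgm' : Measurable g' := hgm.comp measurable_neg
  have hgi' : Integrable g' := by
    have := ((Measure.measurePreserving_neg (volume : Measure ℝ)).integrable_comp_emb
      (Homeomorph.neg ℝ).measurableEmbedding (g := g)).2 hgi
    exact this
  have hint' : ∫ x, g' x = 1 := by
    have := (Measure.measurePreserving_neg (volume : Measure ℝ)).integral_comp
      (Homeomorph.neg ℝ).measurableEmbedding g
    rw [← hint]
    exact this
  have hlc' : ∀ x z a b : ℝ, 0 ≤ a → 0 ≤ b → a + b = 1 →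
      g' x ^ a * g' z ^ b ≤ g' (a * x + b * z) := by
    intro x z a b ha hb hab
    have h := hlc (-x) (-z) a b ha hb hab
    rw [show a * -x + b * -z = -(a * x + b * z) by ring] at h
    exact h
  obtain ⟨B2, hB2, hint2⟩ := tail_integrable_right hg0' hgm' hgi' hint' hlc'
  have hleft : IntegrableOn (fun x => x * g x) (Iic (-B2)) := by
    apply refl_integrableOn
    rw [neg_neg]
    have := hint2.neg
    apply IntegrableOn.congr_fun this _ measurableSet_Ioi
    intro x _
    simp only [Pi.neg_apply]
    ring
  set M := max B1 B2 with hM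
  have hMnn : 0 ≤ M := le_trans hB1 (le_max_left _ _)
  have hmid : IntegrableOn (fun x => x * g x) (Icc (-M) M) := by
    apply Integrable.mono ((hgi.const_mul M).integrableOn (s := Icc (-M) M))
    · exact (measurable_id.mul hgm).aestronglyMeasurable
    · rw [ae_restrict_iff' measurableSet_Icc]
      filter_upwards with x hx
      rw [Real.norm_eq_abs, Real.norm_eq_abs, abs_mul, abs_mul,
        abs_of_nonneg (hg0 x), abs_of_nonneg hMnn]
      apply mul_le_mul_of_nonneg_right _ (hg0 x)
      rw [abs_le]
      exact ⟨hx.1, hx.2⟩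
  have hcover : (univ : Set ℝ) ⊆ Iic (-M) ∪ (Icc (-M) M ∪ Ioi M) := by
    intro x _
    rcases le_or_gt x (-M) with h | h
    · exact Or.inl h
    · rcases le_or_gt x M with h2 | h2
      · exact Or.inr (Or.inl ⟨h.le, h2⟩)
      · exact Or.inr (Or.inr h2)
  have hunion : IntegrableOn (fun x => x * g x) (Iic (-M) ∪ (Icc (-M) M ∪ Ioi M)) := by
    apply IntegrableOn.union
    · exact hleft.mono_set (Iic_subset_Iic.2 (by simp [hM, neg_le_neg (le_max_right B1 B2)]))
    · apply IntegrableOn.union hmid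
      exact hint1.mono_set (Ioi_subset_Ioi (le_max_left B1 B2))
  rw [← integrableOn_univ]
  exact hunion.mono_set hcover

lemma logconcave_density_bound {g : ℝ → ℝ} (hg0 : ∀ x, 0 ≤ g x)
    (husc : UpperSemicontinuous g)
    (hlc : ∀ x z a b : ℝ, 0 ≤ a → 0 ≤ b → a + b = 1 → g x ^ a * g z ^ b ≤ g (a * x + b * z))
    (hint : ∫ x, g x = 1) (hmean : ∫ x, x * g x = 0) {x₀ : ℝ} (hx₀ : 0 < x₀) :
    g x₀ ≤ 1 / x₀ := by
  have hgm : Measurable g := husc.measurable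
  have hgi : Integrable g := by
    by_contra h
    rw [integral_undef h] at hint
    norm_num at hint
  have hxgi : Integrable (fun x => x * g x) := xg_integrable hg0 hgm hgi hint hlc
  by_cases hc0 : g x₀ ≤ 0
  · exact le_trans hc0 (by positivity)
  push_neg at hc0
  set c := g x₀ with hcdef
  set A := ∫ x in Iic x₀, g x with hAdef
  have hA1 : A ≤ 1 := by
    rw [hAdef, ← hint]
    exact setIntegral_le_integral hgi (ae_of_all _ hg0)
  have hA0 : 0 ≤ A := setIntegral_nonneg measurableSet_Iic fun x _ => hg0 x
  have hsplit_mass : A + ∫ x in Ioi x₀, g x = 1 := by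
    rw [hAdef, intervalIntegral.integral_Iic_add_Ioi hgi.integrableOn hgi.integrableOn, hint]
  have hsplit_mean : (∫ x in Iic x₀, x * g x) + ∫ x in Ioi x₀, x * g x = 0 := by
    rw [intervalIntegral.integral_Iic_add_Ioi hxgi.integrableOn hxgi.integrableOn, hmean]
  have hApos : 0 < A := by
    rcases lt_or_ge 0 A with h | h
    · exact h
    have hA : A = 0 := le_antisymm h hA0
    have hae : g =ᵐ[volume.restrict (Iic x₀)] 0 := by
      have := (integral_eq_zero_iff_of_nonneg_ae
        (ae_of_all _ hg0 : 0 ≤ᵐ[volume.restrict (Iic x₀)] g) hgi.integrableOn).1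
      exact this (by rw [← hAdef, hA])
    have h1 : ∫ x in Iic x₀, x * g x = 0 := by
      have : (fun x => x * g x) =ᵐ[volume.restrict (Iic x₀)] 0 := by
        filter_upwards [hae] with x hx
        simp [hx]
      rw [integral_congr_ae this]; simp
    have h2 : ∫ x in Ioi x₀, x * g x = 0 := by linarith
    have h3 : ∫ x in Ioi x₀, x₀ * g x ≤ ∫ x in Ioi x₀, x * g x := by
      apply setIntegral_mono_on (hgi.integrableOn.const_mul x₀) hxgi.integrableOn
        measurableSet_Ioi
      intro x hx
      exact mul_le_mul_of_nonneg_right (le_of_lt hx) (hg0 x)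
    rw [MeasureTheory.integral_const_mul] at h3
    have h4 : (∫ x in Ioi x₀, g x) = 1 := by linarith
    rw [h4] at h3
    nlinarith
  set k := c / A with hkdef
  have hk : 0 < k := div_pos hc0 hApos
  set q : ℝ → ℝ := fun x => c * Real.exp (k * (x - x₀)) with hqdef
  have hqpos : ∀ x, 0 < q x := fun x => by rw [hqdef]; positivity
  have hq_int : IntegrableOn q (Iic x₀) := (exp_integrableOn_Iic hk).const_mul c
  have hqI : ∫ x in Iic x₀, q x = A := by
    rw [hqdef, my_integral_exp_Iic k x₀ c hk, hkdef]
    field_simp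
  have hq2 : ∫ x in Iic x₀, (x₀ - x) * q x = A ^ 2 / c := by
    rw [hqdef, my_integral_linexp_Iic k x₀ c hk, hkdef]
    field_simp
  have hqx₀ : q x₀ = c := by rw [hqdef]; simp
  -- Claim A : once above q, stays above up to x₀
  have claimA : ∀ x', x' ≤ x₀ → q x' ≤ g x' → ∀ x, x' ≤ x → x ≤ x₀ → q x ≤ g x := by
    intro x' hx'le hx'q x hxx' hxle
    rcases eq_or_lt_of_le hx'le with heq | hlt
    · have : x = x₀ := le_antisymm hxle (heq ▸ hxx')
      rw [this, hqx₀]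
    · set lam := (x₀ - x) / (x₀ - x') with hlam
      set mu := (x - x') / (x₀ - x') with hmu
      have hd : 0 < x₀ - x' := by linarith
      have hlam0 : 0 ≤ lam := div_nonneg (by linarith) hd.le
      have hmu0 : 0 ≤ mu := div_nonneg (by linarith) hd.le
      have hsum : lam + mu = 1 := by rw [hlam, hmu]; field_simp; ring
      have hpt : lam * x' + mu * x₀ = x := by rw [hlam, hmu]; field_simp; ring
      have hmain := hlc x' x₀ lam mu hlam0 hmu0 hsum
      rw [hpt] at hmain
      rw [← hcdef] at hmain
      have hlow : q x' ^ lam * c ^ mu ≤ g x' ^ lam * c ^ mu := by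
        apply mul_le_mul_of_nonneg_right _ (Real.rpow_nonneg hc0.le _)
        exact Real.rpow_le_rpow (hqpos x').le hx'q hlam0
      have hq'' : ∀ z : ℝ, q z = Real.exp (Real.log c + k * (z - x₀)) := by
        intro z
        simp only [hqdef]
        rw [Real.exp_add, Real.exp_log hc0]
      have hcexp : c = Real.exp (Real.log c) := (Real.exp_log hc0).symm
      have hqeq : q x' ^ lam * c ^ mu = q x := by
        rw [hq'' x', hq'' x]
        nth_rewrite 2 [hcexp]
        rw [← Real.exp_mul, ← Real.exp_mul, ← Real.exp_add, Real.exp_eq_exp]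
        linear_combination (Real.log c - k * x₀) * hsum + k * hpt
      calc q x = q x' ^ lam * c ^ mu := hqeq.symm
        _ ≤ g x' ^ lam * c ^ mu := hlow
        _ ≤ g x := hmain
  -- the set of points where g dominates q
  set S : Set ℝ := {x | x ≤ x₀ ∧ q x ≤ g x} with hSdef
  have hx₀S : x₀ ∈ S := ⟨le_rfl, le_of_eq hqx₀⟩
  have hlinq_int : IntegrableOn (fun x => (x₀ - x) * q x) (Iic x₀) := by
    have := (linexp_integrableOn_Iic (x₀ := x₀) hk).const_mul c
    apply IntegrableOn.congr_fun this _ measurableSet_Iic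
    intro x _
    simp only [hqdef]
    ring
  have hxq_int : IntegrableOn (fun x => x * q x) (Iic x₀) := by
    have h1 : IntegrableOn (fun x => x₀ * q x - (x₀ - x) * q x) (Iic x₀) :=
      Integrable.sub (hq_int.const_mul x₀) hlinq_int
    apply IntegrableOn.congr_fun h1 _ measurableSet_Iic
    intro x _
    ring
  have hgq0 : ∫ x in Iic x₀, (g x - q x) = 0 := by
    rw [integral_sub hgi.integrableOn hq_int, hqI, ← hAdef, sub_self]
  have key : ∫ x in Iic x₀, (x₀ - x) * g x ≤ A ^ 2 / c := by
    have hIg_def : ∫ x in Iic x₀, (x₀ - x) * g x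
        = x₀ * A - ∫ x in Iic x₀, x * g x := by
      rw [hAdef, ← MeasureTheory.integral_const_mul x₀,
        ← integral_sub (hgi.integrableOn.const_mul x₀) hxgi.integrableOn]
      congr 1
      funext x
      ring
    have hIq_def : ∫ x in Iic x₀, x * q x = x₀ * A - A ^ 2 / c := by
      have h2 : ∫ x in Iic x₀, (x₀ * q x - (x₀ - x) * q x) = x₀ * A - A ^ 2 / c := by
        rw [integral_sub (hq_int.const_mul x₀) hlinq_int,
          MeasureTheory.integral_const_mul, hqI, hq2]
      rw [← h2]
      congr 1
      funext x
      ring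
    suffices h : (∫ x in Iic x₀, x * q x) ≤ ∫ x in Iic x₀, x * g x by
      rw [hIg_def]
      linarith [hIq_def]
    by_cases hS : BddBelow S
    · set u := sInf S with hu
      have hsign : ∀ x ∈ Iic x₀, (u - x) * (g x - q x) ≤ 0 := by
        intro x hx
        rcases lt_trichotomy x u with h | h | h
        · have hxS : x ∉ S := fun hmem => absurd (csInf_le hS hmem) (not_le.2 h)
          have : ¬ q x ≤ g x := fun hq => hxS ⟨hx, hq⟩
          push_neg at this
          nlinarith
        · rw [h]
          simp
        · obtain ⟨x', hx'S, hx'x⟩ := exists_lt_of_csInf_lt ⟨x₀, hx₀S⟩ h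
          have := claimA x' hx'S.1 hx'S.2 x hx'x.le hx
          nlinarith
      have hint_le : ∫ x in Iic x₀, (u - x) * (g x - q x) ≤ 0 :=
        integral_nonpos_of_ae ((ae_restrict_iff' measurableSet_Iic).2
          (ae_of_all _ hsign))
      have hxgq_int : IntegrableOn (fun x => x * g x - x * q x) (Iic x₀) :=
        hxgi.integrableOn.sub hxq_int
      have hgq_int : IntegrableOn (fun x => g x - q x) (Iic x₀) :=
        hgi.integrableOn.sub hq_int
      have hexpand : ∫ x in Iic x₀, (u - x) * (g x - q x)
          = u * (∫ x in Iic x₀, (g x - q x))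
            - ((∫ x in Iic x₀, x * g x) - ∫ x in Iic x₀, x * q x) := by
        rw [← MeasureTheory.integral_const_mul u,
          ← integral_sub hxgi.integrableOn hxq_int,
          ← integral_sub (hgq_int.const_mul u) hxgq_int]
        congr 1
        funext x
        ring
      rw [hexpand, hgq0, mul_zero, zero_sub, neg_nonpos] at hint_le
      linarith
    · -- q ≤ g everywhere on Iic x₀, so g = q a.e. there
      rw [not_bddBelow_iff] at hS
      have hqg : ∀ x ∈ Iic x₀, q x ≤ g x := by
        intro x hx
        obtain ⟨x', hx'S, hx'x⟩ := hS x
        exact claimA x' hx'S.1 hx'S.2 x hx'x.le hx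
      have hae : (fun x => g x - q x) =ᵐ[volume.restrict (Iic x₀)] 0 := by
        apply (integral_eq_zero_iff_of_nonneg_ae _ (hgi.integrableOn.sub hq_int)).1 hgq0
        have h0 : ∀ᵐ x ∂(volume.restrict (Iic x₀)), 0 ≤ g x - q x :=
          (ae_restrict_iff' measurableSet_Iic).2
            (ae_of_all _ fun x hx => sub_nonneg.2 (hqg x hx))
        exact h0
      have : (fun x => x * g x) =ᵐ[volume.restrict (Iic x₀)] (fun x => x * q x) := by
        filter_upwards [hae] with x hx
        simp only [Pi.zero_apply] at hx
        have : g x = q x := by linarith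
        rw [this]
      rw [integral_congr_ae this]
  -- assembling the final chain
  have hfull : ∫ x, (x₀ - x) * g x = x₀ := by
    have : (fun x => (x₀ - x) * g x) = (fun x => x₀ * g x - x * g x) := by
      funext x; ring
    rw [this, integral_sub (hgi.const_mul x₀) hxgi, MeasureTheory.integral_const_mul,
      hint, hmean]
    ring
  have hfgsplit : (∫ x in Iic x₀, (x₀ - x) * g x) + ∫ x in Ioi x₀, (x₀ - x) * g x = x₀ := by
    rw [intervalIntegral.integral_Iic_add_Ioi _ _, hfull]
    · have : (fun x => (x₀ - x) * g x) = (fun x => x₀ * g x - x * g x) := by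
        funext x; ring
      rw [this]
      exact (hgi.integrableOn.const_mul x₀).sub hxgi.integrableOn
    · have : (fun x => (x₀ - x) * g x) = (fun x => x₀ * g x - x * g x) := by
        funext x; ring
      rw [this]
      exact (hgi.integrableOn.const_mul x₀).sub hxgi.integrableOn
  have hneg : ∫ x in Ioi x₀, (x₀ - x) * g x ≤ 0 := by
    apply setIntegral_nonpos measurableSet_Ioi
    intro x hx
    exact mul_nonpos_iff.2 (Or.inr ⟨by simp at hx; linarith, hg0 x⟩)
  have hchain : x₀ ≤ A ^ 2 / c := by
    have h1 : x₀ ≤ ∫ x in Iic x₀, (x₀ - x) * g x := by linarith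
    linarith
  have hA2 : A ^ 2 ≤ 1 := by nlinarith
  have hchain2 : x₀ ≤ 1 / c :=
    le_trans hchain ((div_le_div_iff_of_pos_right hc0).2 hA2)
  rw [le_div_iff₀ hc0] at hchain2
  show c ≤ 1 / x₀
  rw [le_div_iff₀ hx₀]
  nlinarith [hchain2]

/-- For `x₀ > 0`, the density `f x = (1/x₀)·exp(-(x₀-x)/x₀)` for `x ≤ x₀` (and `0` otherwise)
is an upper semi-continuous log-concave probability density on `ℝ` with mean zero satisfying
`f x₀ = 1/x₀`; consequently the supremum over all mean-zero upper semi-continuous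
log-concave densities of the value at `x₀` equals `1/x₀`. -/
theorem logconcave_mean_zero_value_sup (x₀ : ℝ) (hx₀ : 0 < x₀) :
    (∀ x, 0 ≤ (fun x => if x ≤ x₀ then (1 / x₀) * Real.exp (-(x₀ - x) / x₀) else 0) x) ∧
    UpperSemicontinuous (fun x => if x ≤ x₀ then (1 / x₀) * Real.exp (-(x₀ - x) / x₀) else 0) ∧
    (∀ x y a b : ℝ, 0 ≤ a → 0 ≤ b → a + b = 1 →
      (fun x => if x ≤ x₀ then (1 / x₀) * Real.exp (-(x₀ - x) / x₀) else 0) x ^ a *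
        (fun x => if x ≤ x₀ then (1 / x₀) * Real.exp (-(x₀ - x) / x₀) else 0) y ^ b ≤
        (fun x => if x ≤ x₀ then (1 / x₀) * Real.exp (-(x₀ - x) / x₀) else 0) (a * x + b * y)) ∧
    (∫ x, (fun x => if x ≤ x₀ then (1 / x₀) * Real.exp (-(x₀ - x) / x₀) else 0) x) = 1 ∧
    (∫ x, x * (fun x => if x ≤ x₀ then (1 / x₀) * Real.exp (-(x₀ - x) / x₀) else 0) x) = 0 ∧
    (fun x => if x ≤ x₀ then (1 / x₀) * Real.exp (-(x₀ - x) / x₀) else 0) x₀ = 1 / x₀ ∧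
    sSup {y : ℝ | ∃ g : ℝ → ℝ, (∀ x, 0 ≤ g x) ∧ UpperSemicontinuous g ∧
      (∀ x z a b : ℝ, 0 ≤ a → 0 ≤ b → a + b = 1 →
        g x ^ a * g z ^ b ≤ g (a * x + b * z)) ∧
      (∫ x, g x) = 1 ∧ (∫ x, x * g x) = 0 ∧ g x₀ = y} = 1 / x₀ := by
  have hmem : (1 / x₀) ∈ {y : ℝ | ∃ g : ℝ → ℝ, (∀ x, 0 ≤ g x) ∧ UpperSemicontinuous g ∧
      (∀ x z a b : ℝ, 0 ≤ a → 0 ≤ b → a + b = 1 →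
        g x ^ a * g z ^ b ≤ g (a * x + b * z)) ∧
      (∫ x, g x) = 1 ∧ (∫ x, x * g x) = 0 ∧ g x₀ = y} :=
    ⟨fd x₀, fd_nonneg hx₀, fd_usc hx₀, fd_logconcave hx₀, fd_integral hx₀,
      fd_mean hx₀, fd_value hx₀⟩
  have hub : ∀ y ∈ {y : ℝ | ∃ g : ℝ → ℝ, (∀ x, 0 ≤ g x) ∧ UpperSemicontinuous g ∧
      (∀ x z a b : ℝ, 0 ≤ a → 0 ≤ b → a + b = 1 →
        g x ^ a * g z ^ b ≤ g (a * x + b * z)) ∧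
      (∫ x, g x) = 1 ∧ (∫ x, x * g x) = 0 ∧ g x₀ = y}, y ≤ 1 / x₀ := by
    rintro y ⟨g, hg0, husc, hlc, hint, hmean, rfl⟩
    exact logconcave_density_bound hg0 husc hlc hint hmean hx₀
  refine ⟨fd_nonneg hx₀, fd_usc hx₀, fd_logconcave hx₀, fd_integral hx₀,
    fd_mean hx₀, fd_value hx₀, ?_⟩
  exact le_antisymm (csSup_le ⟨1 / x₀, hmem⟩ hub) (le_csSup ⟨1 / x₀, hub⟩ hmem)
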